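/- Let φ be a continuous flow on a compact metric space M, let x ∈ M, and let Λ = ω(x) be the ω-limit set of x. Suppose σ ∈ Λ is a fixed point of the flow and r > 0 is such that Λ is not contained in the closed ball of radius r around σ. Then there exists y ∈ Λ with d(y, σ) = r and d(φ_t(y), σ) ≤ r for all t ≥ 0. -/

import Mathlib

theorem stmt3 {M : Type*} [MetricSpace M] [CompactSpace M]
    (φ : ℝ → M → M)
    (hcont : Continuous fun p : ℝ × M => φ p.1 p.2)
    (hφ0 : ∀ x, φ 0 x = x)
    (hφadd : ∀ s t x, φ (s + t) x = φ s (φ t x))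
    (x : M) (Λ : Set M)
    (hΛ : Λ = {y | ∀ ε > (0:ℝ), ∀ T : ℝ, ∃ t ≥ T, dist (φ t x) y < ε})
    (σ : M) (hσΛ : σ ∈ Λ) (hfix : ∀ t, φ t σ = σ)
    (r : ℝ) (hr : 0 < r)
    (hnot : ∃ z ∈ Λ, r < dist z σ) :
    ∃ y ∈ Λ, dist y σ = r ∧ ∀ t ≥ (0:ℝ), dist (φ t y) σ ≤ r := by
  obtain ⟨z, hz, hrz⟩ := hnot
  rw [hΛ] at hz hσΛ
  -- distance function along the orbit
  set f : ℝ → ℝ := fun s => dist (φ s x) σ with hf_def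
  have hφx : Continuous fun s : ℝ => φ s x :=
    hcont.comp (continuous_id.prodMk continuous_const)
  have hf : Continuous f := hφx.dist continuous_const
  -- times far from σ
  have hfar : ∀ n : ℕ, ∃ s ≥ (n : ℝ), r < f s := by
    intro n
    obtain ⟨s, hs, hd⟩ := hz (dist z σ - r) (by linarith) n
    refine ⟨s, hs, ?_⟩
    have h3 := dist_triangle z (φ s x) σ
    rw [dist_comm z (φ s x)] at h3
    simp only [hf_def]
    linarith
  choose uN huN huNr using hfar
  -- times close to σ
  have hclose : ∀ n : ℕ, ∃ s ≥ uN n, f s < min r (1 / (n + 1)) := by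
    intro n
    obtain ⟨s, hs, hd⟩ := hσΛ (min r (1 / (n + 1)))
      (lt_min hr (by positivity)) (uN n)
    exact ⟨s, hs, hd⟩
  choose tN htN htNd using hclose
  have htNr : ∀ n, f (tN n) < r := fun n => lt_of_lt_of_le (htNd n) (min_le_left _ _)
  -- last crossing time
  set S : ℕ → Set ℝ := fun n => {s | s ∈ Set.Icc (uN n) (tN n) ∧ r ≤ f s} with hS_def
  have hSclosed : ∀ n, IsClosed (S n) := fun n =>
    isClosed_Icc.inter (isClosed_le continuous_const hf)
  have hSne : ∀ n, (S n).Nonempty := fun n =>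
    ⟨uN n, ⟨le_refl _, htN n⟩, (huNr n).le⟩
  have hSbdd : ∀ n, BddAbove (S n) := fun n => ⟨tN n, fun s hs => hs.1.2⟩
  set τ : ℕ → ℝ := fun n => sSup (S n) with hτ_def
  have hτS : ∀ n, τ n ∈ S n := fun n => (hSclosed n).csSup_mem (hSne n) (hSbdd n)
  have hτle : ∀ n, τ n ≤ tN n := fun n => (hτS n).1.2
  have hτlt : ∀ n, τ n < tN n := by
    intro n
    rcases lt_or_eq_of_le (hτle n) with h | h
    · exact h
    · exact absurd ((hτS n).2) (by rw [h]; exact not_le.mpr (htNr n))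
  have hτge : ∀ n, uN n ≤ τ n := fun n => (hτS n).1.1
  -- between τ n and tN n, f ≤ r
  have hIcc : ∀ n, ∀ s ∈ Set.Ioc (τ n) (tN n), f s ≤ r := by
    intro n s hs
    by_contra h
    push_neg at h
    have hsS : s ∈ S n := ⟨⟨le_trans (hτge n) hs.1.le, hs.2⟩, h.le⟩
    exact absurd (le_csSup (hSbdd n) hsS) (not_le.mpr hs.1)
  have hfτr : ∀ n, f (τ n) = r := by
    intro n
    refine le_antisymm ?_ (hτS n).2
    have hcl : IsClosed {s | f s ≤ r} := isClosed_le hf continuous_const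
    have hsub : Set.Ioc (τ n) (tN n) ⊆ {s | f s ≤ r} := fun s hs => hIcc n s hs
    have h2 : Set.Icc (τ n) (tN n) ⊆ {s | f s ≤ r} := by
      rw [← closure_Ioc (hτlt n).ne]
      exact hcl.closure_subset_iff.mpr hsub
    exact h2 ⟨le_refl _, (hτlt n).le⟩
  have hIcc' : ∀ n, ∀ s ∈ Set.Icc (τ n) (tN n), f s ≤ r := by
    intro n s hs
    rcases eq_or_lt_of_le hs.1 with h | h
    · rw [← h, hfτr n]
    · exact hIcc n s ⟨h, hs.2⟩
  have hτbig : ∀ n : ℕ, (n : ℝ) ≤ τ n := fun n => le_trans (huN n) (hτge n)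
  -- convergent subsequence of φ (τ n) x
  obtain ⟨y, -, ψ, hψ, hyt⟩ :=
    isCompact_univ.tendsto_subseq (x := fun n => φ (τ n) x) (fun n => Set.mem_univ _)
  have hdy : dist y σ = r := by
    have h1 : Filter.Tendsto (fun n => f (τ (ψ n))) Filter.atTop (nhds (dist y σ)) :=
      hyt.dist tendsto_const_nhds
    have h2 : (fun n => f (τ (ψ n))) = fun _ => r := funext fun n => hfτr (ψ n)
    rw [h2] at h1
    exact (tendsto_nhds_unique tendsto_const_nhds h1).symm
  -- orbit at times tN tends to σ
  have htNσ : Filter.Tendsto (fun n => φ (tN n) x) Filter.atTop (nhds σ) := by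
    rw [tendsto_iff_dist_tendsto_zero]
    refine squeeze_zero (fun n => dist_nonneg) (fun n => (htNd n).le.trans (min_le_right _ _)) ?_
    exact tendsto_one_div_add_atTop_nhds_zero_nat
  -- dwell times go to infinity
  have hdiff : Filter.Tendsto (fun n => tN (ψ n) - τ (ψ n)) Filter.atTop Filter.atTop := by
    by_contra hcon
    rw [Filter.tendsto_atTop] at hcon
    push_neg at hcon
    obtain ⟨C, hC⟩ := hcon
    obtain ⟨θ, hθ, hθC⟩ := Filter.extraction_of_frequently_atTop hC
    have hmem : ∀ n, tN (ψ (θ n)) - τ (ψ (θ n)) ∈ Set.Icc (0 : ℝ) C := by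
      intro n
      exact ⟨sub_nonneg.mpr (hτle _), (hθC n).le⟩
    obtain ⟨c, -, θ', hθ', hct⟩ := (isCompact_Icc (a := (0:ℝ)) (b := C)).tendsto_subseq hmem
    set m : ℕ → ℕ := fun n => ψ (θ (θ' n)) with hm_def
    have hm1 : Filter.Tendsto (fun n => φ (τ (m n)) x) Filter.atTop (nhds y) :=
      hyt.comp ((hθ.comp hθ').tendsto_atTop)
    have hm2 : Filter.Tendsto (fun n => tN (m n) - τ (m n)) Filter.atTop (nhds c) := hct
    have hm3 : Filter.Tendsto (fun n => φ (tN (m n)) x) Filter.atTop (nhds σ) :=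
      htNσ.comp ((hψ.comp (hθ.comp hθ')).tendsto_atTop)
    have heq : ∀ n, φ (tN (m n)) x = φ (tN (m n) - τ (m n)) (φ (τ (m n)) x) := by
      intro n
      rw [← hφadd]
      ring_nf
    have hm4 : Filter.Tendsto (fun n => φ (tN (m n) - τ (m n)) (φ (τ (m n)) x))
        Filter.atTop (nhds (φ c y)) := by
      have := (hcont.tendsto (c, y)).comp (hm2.prodMk_nhds hm1)
      exact this
    have hσy : σ = φ c y := by
      refine tendsto_nhds_unique ?_ hm4
      simpa only [heq] using hm3
    have hyσ : y = σ := by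
      have : φ (-c) (φ c y) = y := by rw [← hφadd]; simp [hφ0]
      rw [← hσy, hfix] at this
      exact this.symm
    rw [hyσ, dist_self] at hdy
    linarith
  refine ⟨y, ?_, hdy, ?_⟩
  · rw [hΛ]
    intro ε hε T
    rw [Metric.tendsto_atTop] at hyt
    obtain ⟨N, hN⟩ := hyt ε hε
    obtain ⟨N', hN'⟩ := exists_nat_ge T
    refine ⟨τ (ψ (max N N')), ?_, ?_⟩
    · calc T ≤ (N' : ℝ) := hN'
        _ ≤ (max N N' : ℕ) := by exact_mod_cast Nat.cast_le.mpr (le_max_right _ _)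
        _ ≤ (ψ (max N N') : ℝ) := by exact_mod_cast hψ.le_apply
        _ ≤ τ (ψ (max N N')) := hτbig _
    · have := hN (max N N') (le_max_left _ _)
      simpa using this
  · intro t ht
    have hlim : Filter.Tendsto (fun n => φ (t + τ (ψ n)) x) Filter.atTop (nhds (φ t y)) := by
      have hφt : Continuous (φ t) := hcont.comp (continuous_const.prodMk continuous_id)
      have := (hφt.tendsto y).comp hyt
      simpa only [Function.comp_def, ← hφadd] using this
    have hev : ∀ᶠ n in Filter.atTop, dist (φ (t + τ (ψ n)) x) σ ≤ r := by
      filter_upwards [hdiff.eventually_ge_atTop t] with n hn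
      exact hIcc' (ψ n) (t + τ (ψ n)) ⟨by linarith, by linarith⟩
    exact le_of_tendsto (hlim.dist tendsto_const_nhds) hev
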